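/- Let A be the ℕ×ℕ matrix with entries A_{i,j} = h_{j-i}(a_1,...,a_i) for i,j ≥ 1 (zero if j < i), and let B be the ℕ×ℕ matrix with entries B_{i,j} = (-1)^{i-j} e_{i-j}(a_1,...,a_{i-1}) (zero if j > i). Then B A = Id, i.e. ∑_k B_{n,k} A_{k,r} = δ_{n,r} for all n, r ≥ 1. -/

import Mathlib

/-- Elementary symmetric polynomial `e_m` in the first `n` entries of `a`. -/
noncomputable def esymm (n m : ℕ) (a : ℕ → ℂ) : ℂ :=
  ∑ S ∈ (Finset.range n).powersetCard m, ∏ i ∈ S, a i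

/-- Complete homogeneous symmetric polynomial `h_m` in the first `r` entries of `a`. -/
noncomputable def hsymm (r m : ℕ) (a : ℕ → ℂ) : ℂ :=
  ∑ σ ∈ (Finset.range r).sym m, (Multiset.map a σ.val).prod

lemma esymm_zero (p : ℕ) (a : ℕ → ℂ) : esymm p 0 a = 1 := by
  simp [esymm]

lemma hsymm_zero (p : ℕ) (a : ℕ → ℂ) : hsymm p 0 a = 1 := by
  simp [hsymm, Sym.eq_nil_of_card_zero]

lemma esymm_nil (m : ℕ) (a : ℕ → ℂ) : esymm 0 (m + 1) a = 0 := by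
  unfold esymm
  rw [Finset.powersetCard_eq_empty.mpr (by simp), Finset.sum_empty]

lemma hsymm_nil (m : ℕ) (a : ℕ → ℂ) : hsymm 0 (m + 1) a = 0 := by
  simp [hsymm, Finset.sym_empty]

lemma esymm_succ (p m : ℕ) (a : ℕ → ℂ) :
    esymm (p + 1) (m + 1) a = esymm p (m + 1) a + a p * esymm p m a := by
  unfold esymm
  rw [Finset.range_add_one, Finset.powersetCard_succ_insert Finset.notMem_range_self,
    Finset.sum_union, Finset.sum_image, Finset.mul_sum]
  · congr 1
    refine Finset.sum_congr rfl fun S hS => ?_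
    have hp : p ∉ S := fun hp => Finset.notMem_range_self
      ((Finset.mem_powersetCard.mp hS).1 hp)
    rw [Finset.prod_insert hp]
  · intro S hS T hT hST
    have hpS : p ∉ S := fun hp => Finset.notMem_range_self
      ((Finset.mem_powersetCard.mp hS).1 hp)
    have hpT : p ∉ T := fun hp => Finset.notMem_range_self
      ((Finset.mem_powersetCard.mp hT).1 hp)
    have := congrArg (fun (X : Finset ℕ) => X.erase p) hST
    simpa [Finset.erase_insert hpS, Finset.erase_insert hpT] using this
  · rw [Finset.disjoint_right]
    rintro S hS hS'
    obtain ⟨T, hT, rfl⟩ := Finset.mem_image.mp hS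
    have hmem := (Finset.mem_powersetCard.mp hS').1 (Finset.mem_insert_self p T)
    exact Finset.notMem_range_self hmem

lemma hsymm_succ (p m : ℕ) (a : ℕ → ℂ) :
    hsymm (p + 1) (m + 1) a = hsymm p (m + 1) a + a p * hsymm (p + 1) m a := by
  unfold hsymm
  rw [← Finset.sum_filter_add_sum_filter_not ((Finset.range (p+1)).sym (m+1)) (fun s => p ∈ s),
    add_comm, Finset.mul_sum]
  congr 1
  · apply Finset.sum_congr
    · ext s
      simp only [Finset.mem_filter, Finset.mem_sym_iff, Finset.mem_range, Nat.lt_succ_iff]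
      constructor
      · rintro ⟨h, hp⟩ x hx
        exact lt_of_le_of_ne (h x hx) (by rintro rfl; exact hp hx)
      · exact fun h => ⟨fun x hx => (h x hx).le, fun hp => lt_irrefl p (h p hp)⟩
    · intros; rfl
  · refine Finset.sum_bij' (i := fun s hs => Sym.erase s p (Finset.mem_filter.mp hs).2)
      (j := fun t _ => p ::ₛ t) ?_ ?_ ?_ ?_ ?_
    · intro s hs
      obtain ⟨hs1, hs2⟩ := Finset.mem_filter.mp hs
      rw [Finset.mem_sym_iff] at hs1 ⊢
      intro x hx
      exact hs1 x (Multiset.mem_of_mem_erase hx)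
    · intro t ht
      rw [Finset.mem_filter]
      refine ⟨?_, Sym.mem_cons_self p t⟩
      rw [Finset.mem_sym_iff] at ht ⊢
      intro x hx
      rcases Sym.mem_cons.mp hx with h | h
      · exact Finset.mem_range.mpr (by omega)
      · exact ht x h
    · intro s hs
      exact Sym.cons_erase _
    · intro t ht
      exact Sym.erase_cons_head t p
    · intro s hs
      beta_reduce
      have h2 : p ∈ s.val := (Finset.mem_filter.mp hs).2
      calc (Multiset.map a s.val).prod
          = (Multiset.map a (p ::ₘ s.val.erase p)).prod := by
            rw [Multiset.cons_erase h2]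
        _ = a p * (Multiset.map a (s.val.erase p)).prod := by
            rw [Multiset.map_cons, Multiset.prod_cons]
        _ = a p * (Multiset.map a (Sym.erase s p (Finset.mem_filter.mp hs).2).val).prod := rfl

lemma esymm_succ' (p j : ℕ) (a : ℕ → ℂ) :
    esymm (p + 1) j a = esymm p j a + (if j = 0 then 0 else a p * esymm p (j - 1) a) := by
  cases j with
  | zero => simp [esymm_zero]
  | succ i => simp [esymm_succ]

lemma Lfix (a : ℕ → ℂ) : ∀ p m : ℕ,
    ∑ j ∈ Finset.range (m + 1), (-1 : ℂ) ^ j * esymm p j a * hsymm p (m - j) a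
      = if m = 0 then 1 else 0 := by
  intro p
  induction p with
  | zero =>
    intro m
    cases m with
    | zero => simp [esymm_zero, hsymm_zero]
    | succ m =>
      rw [if_neg (Nat.succ_ne_zero m)]
      apply Finset.sum_eq_zero
      intro j hj
      cases j with
      | zero => simp [esymm_zero, hsymm_nil]
      | succ i => simp [esymm_nil]
  | succ p IH =>
    have hM : ∀ m, ∑ j ∈ Finset.range (m + 1),
        (-1 : ℂ) ^ j * esymm p j a * hsymm (p + 1) (m - j) a = a p ^ m := by
      intro m
      induction m with
      | zero => simp [esymm_zero, hsymm_zero]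
      | succ m IHm =>
        rw [Finset.sum_range_succ]
        have hterm : ∀ j ∈ Finset.range (m + 1),
            (-1 : ℂ) ^ j * esymm p j a * hsymm (p + 1) (m + 1 - j) a
              = (-1 : ℂ) ^ j * esymm p j a * hsymm p (m + 1 - j) a
                + a p * ((-1 : ℂ) ^ j * esymm p j a * hsymm (p + 1) (m - j) a) := by
          intro j hj
          have hj' : j ≤ m := Nat.lt_succ_iff.mp (Finset.mem_range.mp hj)
          have h1 : m + 1 - j = (m - j) + 1 := by omega
          rw [h1, hsymm_succ]
          ring
        rw [Finset.sum_congr rfl hterm, Finset.sum_add_distrib, ← Finset.mul_sum, IHm]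
        have hL := IH (m + 1)
        rw [if_neg (Nat.succ_ne_zero m), Finset.sum_range_succ] at hL
        simp only [Nat.sub_self, hsymm_zero, mul_one] at hL ⊢
        linear_combination hL
    intro m
    cases m with
    | zero => simp [esymm_zero, hsymm_zero]
    | succ m =>
      rw [if_neg (Nat.succ_ne_zero m)]
      have expand : ∀ j ∈ Finset.range (m + 2),
          (-1 : ℂ) ^ j * esymm (p + 1) j a * hsymm (p + 1) (m + 1 - j) a
            = (-1 : ℂ) ^ j * esymm p j a * hsymm (p + 1) (m + 1 - j) a
              + (-1 : ℂ) ^ j * (if j = 0 then 0 else a p * esymm p (j - 1) a)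
                * hsymm (p + 1) (m + 1 - j) a := by
        intro j hj
        rw [esymm_succ']
        ring
      rw [Finset.sum_congr rfl expand, Finset.sum_add_distrib, hM (m + 1)]
      have hsecond : ∑ j ∈ Finset.range (m + 2),
          (-1 : ℂ) ^ j * (if j = 0 then 0 else a p * esymm p (j - 1) a)
            * hsymm (p + 1) (m + 1 - j) a = -(a p * a p ^ m) := by
        rw [Finset.sum_range_succ']
        have hre : ∀ i ∈ Finset.range (m + 1),
            (-1 : ℂ) ^ (i + 1) * (if i + 1 = 0 then 0 else a p * esymm p (i + 1 - 1) a)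
              * hsymm (p + 1) (m + 1 - (i + 1)) a
            = -(a p * ((-1 : ℂ) ^ i * esymm p i a * hsymm (p + 1) (m - i) a)) := by
          intro i hi
          have h1 : m + 1 - (i + 1) = m - i := by omega
          rw [h1, if_neg (Nat.succ_ne_zero i), Nat.add_sub_cancel]
          ring
        rw [Finset.sum_congr rfl hre]
        rw [Finset.sum_neg_distrib, ← Finset.mul_sum, hM m]
        simp
      rw [hsecond]
      ring

lemma club (a : ℕ → ℂ) (n r K : ℕ) (hnK : n ≤ K) : K ≤ r →
    ∑ k ∈ Finset.Icc n K, (-1 : ℂ) ^ (k - n) * esymm (k - 1) (k - n) a * hsymm k (r - k) a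
      = ∑ j ∈ Finset.range (K - n + 1), (-1 : ℂ) ^ j * esymm K j a * hsymm K (r - n - j) a := by
  induction K, hnK using Nat.le_induction with
  | base =>
    intro _
    rw [Nat.sub_self]
    simp [esymm_zero]
  | succ K hnK IH =>
    intro hK1
    rw [Finset.sum_Icc_succ_top (by omega : n ≤ K + 1), IH (by omega)]
    have h1 : K + 1 - n + 1 = (K - n + 1) + 1 := by omega
    have expand : ∀ j ∈ Finset.range ((K - n + 1) + 1),
        (-1 : ℂ) ^ j * esymm (K + 1) j a * hsymm (K + 1) (r - n - j) a
          = (-1 : ℂ) ^ j * esymm K j a * hsymm (K + 1) (r - n - j) a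
            + (-1 : ℂ) ^ j * (if j = 0 then 0 else a K * esymm K (j - 1) a)
              * hsymm (K + 1) (r - n - j) a := by
      intro j hj
      rw [esymm_succ']
      ring
    rw [h1, Finset.sum_congr rfl expand, Finset.sum_add_distrib]
    have hBlow : ∀ j ∈ Finset.range (K - n + 1),
        (-1 : ℂ) ^ j * esymm K j a * hsymm (K + 1) (r - n - j) a
          = (-1 : ℂ) ^ j * esymm K j a * hsymm K (r - n - j) a
            + a K * ((-1 : ℂ) ^ j * esymm K j a * hsymm (K + 1) (r - n - j - 1) a) := by
      intro j hj
      have hj' : j ≤ K - n := Nat.lt_succ_iff.mp (Finset.mem_range.mp hj)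
      obtain ⟨d, hd⟩ : ∃ d, r - n - j = d + 1 := ⟨r - n - j - 1, by omega⟩
      have hd2 : r - n - j - 1 = d := by omega
      rw [hd2, hd, hsymm_succ]
      ring
    conv_rhs => rw [Finset.sum_range_succ, Finset.sum_congr rfl hBlow, Finset.sum_add_distrib]
    have hC : ∑ j ∈ Finset.range ((K - n + 1) + 1),
        (-1 : ℂ) ^ j * (if j = 0 then 0 else a K * esymm K (j - 1) a)
          * hsymm (K + 1) (r - n - j) a
        = -∑ j ∈ Finset.range (K - n + 1),
            a K * ((-1 : ℂ) ^ j * esymm K j a * hsymm (K + 1) (r - n - j - 1) a) := by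
      rw [Finset.sum_range_succ']
      have hre : ∀ i ∈ Finset.range (K - n + 1),
          (-1 : ℂ) ^ (i + 1) * (if i + 1 = 0 then 0 else a K * esymm K (i + 1 - 1) a)
            * hsymm (K + 1) (r - n - (i + 1)) a
          = -(a K * ((-1 : ℂ) ^ i * esymm K i a * hsymm (K + 1) (r - n - i - 1) a)) := by
        intro i hi
        have h3 : r - n - (i + 1) = r - n - i - 1 := by omega
        rw [h3, if_neg (Nat.succ_ne_zero i), Nat.add_sub_cancel]
        ring
      rw [Finset.sum_congr rfl hre, Finset.sum_neg_distrib]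
      simp
    rw [hC]
    have h4 : K + 1 - n = K - n + 1 := by omega
    have h5 : K + 1 - 1 = K := by omega
    have h6 : r - (K + 1) = r - n - (K - n + 1) := by omega
    rw [h4, h5, h6]
    ring


/-- The matrices `B_{n,k} = (-1)^{n-k} e_{k-n}(a_1,…,a_{k-1})` and
`A_{k,r} = h_{r-k}(a_1,…,a_k)` satisfy `B A = Id`:
`∑_{k=n}^{r} (-1)^{n-k} e_{k-n}(a_1,…,a_{k-1}) h_{r-k}(a_1,…,a_k) = δ_{n,r}` for `n, r ≥ 1`. -/
theorem stmt_6 (a : ℕ → ℂ) (n r : ℕ) (hn : 1 ≤ n) (hr : 1 ≤ r) :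
    ∑ k ∈ Finset.Icc n r, (-1 : ℂ) ^ (k - n) * esymm (k - 1) (k - n) a * hsymm k (r - k) a
      = if n = r then 1 else 0 := by
  by_cases h : n ≤ r
  · rw [club a n r r h le_rfl, Lfix a r (r - n)]
    by_cases h2 : n = r
    · rw [if_pos h2, if_pos (by omega)]
    · rw [if_neg (by omega), if_neg h2]
  · rw [Finset.Icc_eq_empty h, Finset.sum_empty, if_neg (by omega)]
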